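/- arXiv:math/0306166 — 2 statements merged into one kernel-verified Lean document; each statement's English description precedes it below -/
import Mathlib

section
/- Let P₁,…,Pₘ be induced-hereditary graph properties, let P = P₁∘⋯∘Pₘ, and let G be a P-strict graph. Then for every (P₁,…,Pₘ)-partition (V₁,…,Vₘ) of G and every i, the induced subgraph G[Vᵢ] is Pᵢ-strict; in particular every Vᵢ is nonempty. -/
/-!  Common framework: finite simple graphs on finite subsets of `ℕ`,
graph properties, `(P₁,…,Pₙ)`-partitions, products of properties,
`P`-decompositions, strict graphs, decomposability numbers, generating
sets, *-joins of copies, and the respecting notions from the paper. -/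

/-- A finite simple graph on a finite vertex set of natural numbers. -/
structure NGraph where
  verts : Finset ℕ
  Adj : ℕ → ℕ → Prop
  symm : ∀ a b, Adj a b → Adj b a
  loopless : ∀ a, ¬Adj a a
  mem_of_adj : ∀ a b, Adj a b → a ∈ verts ∧ b ∈ verts

/-- The null graph `K₀` (no vertices). -/
def nullGraph : NGraph where
  verts := ∅
  Adj _ _ := False
  symm _ _ h := h.elim
  loopless _ h := h
  mem_of_adj _ _ h := h.elim

namespace NGraph

/-- The subgraph of `G` induced by the vertex set `U`. -/
def induce (G : NGraph) (U : Finset ℕ) : NGraph where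
  verts := G.verts ∩ U
  Adj a b := G.Adj a b ∧ a ∈ U ∧ b ∈ U
  symm a b h := ⟨G.symm a b h.1, h.2.2, h.2.1⟩
  loopless a h := G.loopless a h.1
  mem_of_adj a b h := ⟨Finset.mem_inter.2 ⟨(G.mem_of_adj a b h.1).1, h.2.1⟩,
    Finset.mem_inter.2 ⟨(G.mem_of_adj a b h.1).2, h.2.2⟩⟩

/-- `φ` is an isomorphism from `G` onto `H`. -/
def IsoVia (G H : NGraph) (φ : ℕ → ℕ) : Prop :=
  Set.BijOn φ (G.verts : Set ℕ) (H.verts : Set ℕ) ∧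
    ∀ a ∈ G.verts, ∀ b ∈ G.verts, (G.Adj a b ↔ H.Adj (φ a) (φ b))

/-- `G` and `H` are isomorphic. -/
def Iso (G H : NGraph) : Prop := ∃ φ, G.IsoVia H φ

/-- `H ≤ G` : `H` is isomorphic to an induced subgraph of `G`. -/
def Le (H G : NGraph) : Prop := ∃ U ⊆ G.verts, H.Iso (G.induce U)

end NGraph

/-- `K` is the disjoint union of the family `C` of graphs. -/
def IsDisjUnion {k : ℕ} (K : NGraph) (C : Fin k → NGraph) : Prop :=
  (∀ i j, i ≠ j → Disjoint (C i).verts (C j).verts) ∧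
  K.verts = Finset.univ.biUnion (fun j => (C j).verts) ∧
  ∀ a b, K.Adj a b ↔ ∃ j, (C j).Adj a b

/-- `kG₀` : the set of graphs that are disjoint unions of `k` copies of `G₀`. -/
def kCopies (k : ℕ) (G₀ : NGraph) : Set NGraph :=
  {K | ∃ C : Fin k → NGraph, (∀ j, (C j).Iso G₀) ∧ IsDisjUnion K C}

/-- The *-join `G₁ * ⋯ * Gₙ` of a family of graphs (with pairwise disjoint
vertex sets): all graphs on the union of the vertex sets inducing each `Gᵢ`,
so that only edges joining distinct `Gᵢ`'s may be added. -/
def StarJoin {n : ℕ} (Gs : Fin n → NGraph) : Set NGraph :=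
  {H | H.verts = Finset.univ.biUnion (fun i => (Gs i).verts) ∧
    ∀ i, ∀ a ∈ (Gs i).verts, ∀ b ∈ (Gs i).verts, (H.Adj a b ↔ (Gs i).Adj a b)}

/-- `G * K₁` : the graphs obtained from `G` by adding one new vertex joined
arbitrarily to `G`. -/
def joinOne (G : NGraph) : Set NGraph :=
  {H | ∃ v, v ∉ G.verts ∧ H.verts = insert v G.verts ∧
    ∀ a ∈ G.verts, ∀ b ∈ G.verts, (H.Adj a b ↔ G.Adj a b)}

/-- A graph property: a nonempty isomorphism-closed class of graphs (it
contains the null graph, which by convention belongs to every property, and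
some graph with at least one vertex). -/
def IsProperty (P : Set NGraph) : Prop :=
  nullGraph ∈ P ∧ (∃ G ∈ P, G.verts.Nonempty) ∧
    ∀ G H, NGraph.Iso G H → G ∈ P → H ∈ P

/-- `P` is induced-hereditary. -/
def IndHer (P : Set NGraph) : Prop := ∀ G H, G ∈ P → NGraph.Le H G → H ∈ P

/-- `P` is additive: closed under disjoint unions. -/
def Additive' (P : Set NGraph) : Prop :=
  ∀ G H K : NGraph, G ∈ P → H ∈ P → IsDisjUnion K ![G, H] → K ∈ P

/-- An additive induced-hereditary graph property. -/
def IsAIH (P : Set NGraph) : Prop := IsProperty P ∧ IndHer P ∧ Additive' P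

/-- A `(P₁,…,Pₙ)`-partition of `G` (parts may be empty). -/
def IsPartitionInto {n : ℕ} (Ps : Fin n → Set NGraph) (G : NGraph)
    (V : Fin n → Finset ℕ) : Prop :=
  (∀ i j, i ≠ j → Disjoint (V i) (V j)) ∧
  Finset.univ.biUnion V = G.verts ∧
  ∀ i, G.induce (V i) ∈ Ps i

/-- The product `P₁ ∘ ⋯ ∘ Pₙ` of properties. -/
def ProdProp {n : ℕ} (Ps : Fin n → Set NGraph) : Set NGraph :=
  {G | ∃ V : Fin n → Finset ℕ, IsPartitionInto Ps G V}

/-- A `P`-decomposition of `G` with parts `V` : the parts are nonempty and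
partition `V(G)`, and for every `k ≥ 1` every graph in
`kG[V₁] * ⋯ * kG[Vₙ]` belongs to `P`. -/
def IsDecomp (P : Set NGraph) (G : NGraph) {n : ℕ} (V : Fin n → Finset ℕ) : Prop :=
  (∀ i, (V i).Nonempty) ∧
  (∀ i j, i ≠ j → Disjoint (V i) (V j)) ∧
  Finset.univ.biUnion V = G.verts ∧
  ∀ k : ℕ, 0 < k → ∀ A : Fin n → NGraph,
    (∀ i, A i ∈ kCopies k (G.induce (V i))) →
    (∀ i j, i ≠ j → Disjoint (A i).verts (A j).verts) →
    ∀ H ∈ StarJoin A, H ∈ P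

/-- `dec_P(G)` : the maximum number of parts of a `P`-decomposition of `G`
(`0` if there is none). -/
noncomputable def decP (P : Set NGraph) (G : NGraph) : ℕ :=
  sSup {n | ∃ V : Fin n → Finset ℕ, IsDecomp P G V}

/-- `G` is `P`-strict : `G ∈ P` but some graph in `G * K₁` is not in `P`. -/
def Strict (P : Set NGraph) (G : NGraph) : Prop :=
  G ∈ P ∧ ∃ H ∈ joinOne G, H ∉ P

/-- `dec(P) = min { dec_P(G) : G ∈ S(P) }`. -/
noncomputable def decOf (P : Set NGraph) : ℕ :=
  sInf (decP P '' {G | Strict P G})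

/-- `dec_P(𝒢) = min { dec_P(G) : G ∈ 𝒢 }`. -/
noncomputable def decSet (P 𝒢 : Set NGraph) : ℕ := sInf (decP P '' 𝒢)

/-- `⟨𝒢⟩` : the induced-hereditary property generated by `𝒢`. -/
def gen (𝒢 : Set NGraph) : Set NGraph := {G | ∃ H ∈ 𝒢, NGraph.Le G H}

/-- `𝒢` is a generating set for `P`. -/
def Generates (𝒢 P : Set NGraph) : Prop := gen 𝒢 = P

/-- `G` is uniquely `P`-decomposable: it has exactly one `P`-decomposition
(as an unordered partition) with `dec_P(G)` parts. -/
def UniquelyDecomposable (P : Set NGraph) (G : NGraph) : Prop :=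
  (∃ V : Fin (decP P G) → Finset ℕ, IsDecomp P G V) ∧
  ∀ V W : Fin (decP P G) → Finset ℕ, IsDecomp P G V → IsDecomp P G W →
    ∃ σ : Equiv.Perm (Fin (decP P G)), ∀ i, W i = V (σ i)

/-- Data exhibiting `Gstar` as a member of `s ⊛ G` : `s` pairwise disjoint
copies of `G` (given by isomorphisms) whose *-join contains `Gstar`. -/
structure CopyJoin (G : NGraph) (s : ℕ) (Gstar : NGraph) where
  copies : Fin s → NGraph
  maps : Fin s → ℕ → ℕ
  iso : ∀ k, G.IsoVia (copies k) (maps k)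
  disj : ∀ k l, k ≠ l → Disjoint (copies k).verts (copies l).verts
  mem : Gstar ∈ StarJoin copies

/-- `Gstar ∈ s ⊛ G` respects `d₀ = (U₁,…,Uₘ)` : every added edge between two
different copies of `G` meets (copies of) two different `Uⱼ`'s, i.e. there is
no edge between the copies of the same `Uⱼ` in two different copies of `G`. -/
def CopyJoin.RespectsJoin {G : NGraph} {s : ℕ} {Gstar : NGraph}
    (cj : CopyJoin G s Gstar) {m : ℕ} (U : Fin m → Finset ℕ) : Prop :=
  ∀ k l : Fin s, k ≠ l → ∀ j : Fin m, ∀ a ∈ (U j).image (cj.maps k),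
    ∀ b ∈ (U j).image (cj.maps l), ¬Gstar.Adj a b

/-- A partition `V` of `Gstar ∈ s ⊛ G` respects `d₀ = (U₁,…,Uₘ)` uniformly:
for each part `Vᵢ` there is a single `Uⱼ` such that in every copy `Gᵏ`,
`Vᵢ ∩ V(Gᵏ)` is contained in the copy of `Uⱼ`. -/
def CopyJoin.RespectsUniformly {G : NGraph} {s : ℕ} {Gstar : NGraph}
    (cj : CopyJoin G s Gstar) {n m : ℕ}
    (V : Fin n → Finset ℕ) (U : Fin m → Finset ℕ) : Prop :=
  ∀ i, ∃ j, ∀ k, V i ∩ (cj.copies k).verts ⊆ (U j).image (cj.maps k)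

/-- An irreducible additive induced-hereditary property: one that is not the
product of two additive induced-hereditary properties. -/
def IrredProp (P : Set NGraph) : Prop :=
  IsAIH P ∧ ¬∃ Q R : Set NGraph, IsAIH Q ∧ IsAIH R ∧ P = ProdProp ![Q, R]

/-- Two graphs with the same vertex set and agreeing adjacency on it are
isomorphic (via the identity map). -/
lemma iso_of_eqOn (G H : NGraph) (hv : G.verts = H.verts)
    (ha : ∀ a ∈ G.verts, ∀ b ∈ G.verts, (G.Adj a b ↔ H.Adj a b)) :
    G.Iso H := by
  refine ⟨id, ?_, ?_⟩
  · rw [hv]; exact Set.bijOn_id _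
  · exact ha

/-- Any graph with exactly one vertex and no other vertices belongs to any
induced-hereditary property. -/
lemma singleton_mem (P : Set NGraph) (hP : IsProperty P) (hher : IndHer P)
    (H : NGraph) (v : ℕ) (hHv : H.verts = {v}) : H ∈ P := by
  obtain ⟨-, ⟨G0, hG0, u, hu⟩, hiso⟩ := hP
  have hv2 : (G0.induce {u}).verts = {u} := by
    show G0.verts ∩ {u} = {u}
    exact Finset.inter_eq_right.2 (Finset.singleton_subset_iff.2 hu)
  have hKmem : G0.induce {u} ∈ P :=
    hher G0 _ hG0 ⟨{u}, Finset.singleton_subset_iff.2 hu,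
      id, Set.bijOn_id _, fun a _ b _ => Iff.rfl⟩
  refine hiso (G0.induce {u}) H ⟨fun _ => v, ?_, ?_⟩ hKmem
  · rw [hv2, hHv]
    simp only [Finset.coe_singleton]
    refine ⟨fun x _ => rfl, fun x hx y hy _ => ?_, fun x hx => ⟨u, rfl, ?_⟩⟩
    · rw [Set.mem_singleton_iff] at hx hy
      exact hx.trans hy.symm
    · rw [Set.mem_singleton_iff] at hx
      exact hx.symm
  · intro a ha b hb
    rw [hv2] at ha hb
    have hau := Finset.mem_singleton.1 ha
    have hbu := Finset.mem_singleton.1 hb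
    subst hau; subst hbu
    constructor
    · rintro ⟨hadj, -⟩
      exact absurd hadj (G0.loopless _)
    · intro hadj
      exact absurd hadj (H.loopless v)

-- STATEMENT 1
theorem statement1 (m : ℕ) (Ps : Fin m → Set NGraph)
    (hprop : ∀ i, IsProperty (Ps i)) (hher : ∀ i, IndHer (Ps i))
    (G : NGraph) (hG : Strict (ProdProp Ps) G)
    (V : Fin m → Finset ℕ) (hV : IsPartitionInto Ps G V) (i : Fin m) :
    Strict (Ps i) (G.induce (V i)) ∧ (V i).Nonempty := by
  obtain ⟨hGP, H, ⟨v, hvG, hHverts, hHadj⟩, hHnot⟩ := hG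
  obtain ⟨hdisj, hunion, hparts⟩ := hV
  -- each part is contained in the vertex set
  have hVsub : ∀ j, V j ⊆ G.verts := by
    intro j
    rw [← hunion]
    intro a ha
    exact Finset.mem_biUnion.2 ⟨j, Finset.mem_univ j, ha⟩
  have hvV : ∀ j, v ∉ V j := fun j hj => hvG (hVsub j hj)
  -- strictness of the part
  have hstrict : Strict (Ps i) (G.induce (V i)) := by
    refine ⟨hparts i, ?_⟩
    by_contra hno
    push_neg at hno
    -- build a partition of H witnessing H ∈ ProdProp Ps
    apply hHnot
    refine ⟨fun j => if j = i then insert v (V i) else V j, ?_, ?_, ?_⟩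
    · intro j k hjk
      dsimp only
      by_cases hji : j = i <;> by_cases hki : k = i
      · exact absurd (hji.trans hki.symm) hjk
      · rw [if_pos hji, if_neg hki, Finset.disjoint_insert_left]
        refine ⟨hvV k, ?_⟩
        rw [← hji]; exact hdisj j k hjk
      · rw [if_neg hji, if_pos hki, Finset.disjoint_insert_right]
        refine ⟨hvV j, ?_⟩
        rw [← hki]; exact hdisj j k hjk
      · rw [if_neg hji, if_neg hki]; exact hdisj j k hjk
    · rw [hHverts, ← hunion]
      ext a
      simp only [Finset.mem_biUnion, Finset.mem_univ, true_and, Finset.mem_insert]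
      constructor
      · rintro ⟨j, hj⟩
        by_cases hji : j = i
        · rw [hji, if_pos rfl, Finset.mem_insert] at hj
          rcases hj with h | h
          · exact Or.inl h
          · exact Or.inr ⟨i, h⟩
        · rw [if_neg hji] at hj
          exact Or.inr ⟨j, hj⟩
      · rintro (h | ⟨j, hj⟩)
        · exact ⟨i, by rw [if_pos rfl, h]; exact Finset.mem_insert_self _ _⟩
        · by_cases hji : j = i
          · exact ⟨i, by rw [if_pos rfl]; exact Finset.mem_insert_of_mem (hji ▸ hj)⟩
          · exact ⟨j, by rw [if_neg hji]; exact hj⟩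
    · intro j
      dsimp only
      by_cases hji : j = i
      · subst hji
        rw [if_pos rfl]
        apply hno
        -- H.induce (insert v (V j)) ∈ joinOne (G.induce (V j))
        refine ⟨v, ?_, ?_, ?_⟩
        · simp only [NGraph.induce, Finset.mem_inter]
          rintro ⟨hv1, -⟩; exact hvG hv1
        · simp only [NGraph.induce, hHverts]
          ext a
          simp only [Finset.mem_inter, Finset.mem_insert]
          constructor
          · rintro ⟨h1 | h1, h2 | h2⟩
            · exact Or.inl h1
            · exact Or.inl h1
            · exact Or.inl h2
            · exact Or.inr ⟨h1, h2⟩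
          · rintro (h | ⟨h1, h2⟩)
            · exact ⟨Or.inl h, Or.inl h⟩
            · exact ⟨Or.inr h1, Or.inr h2⟩
        · intro a ha b hb
          simp only [NGraph.induce, Finset.mem_inter] at ha hb
          simp only [NGraph.induce, Finset.mem_insert]
          constructor
          · rintro ⟨h1, -, -⟩
            exact ⟨(hHadj a ha.1 b hb.1).1 h1, ha.2, hb.2⟩
          · rintro ⟨h1, h2, h3⟩
            exact ⟨(hHadj a ha.1 b hb.1).2 h1, Or.inr ha.2, Or.inr hb.2⟩
      · rw [if_neg hji]
        refine (hprop j).2.2 (G.induce (V j)) (H.induce (V j)) ?_ (hparts j)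
        apply iso_of_eqOn
        · simp only [NGraph.induce, hHverts]
          ext a
          simp only [Finset.mem_inter, Finset.mem_insert]
          constructor
          · rintro ⟨h1, h2⟩; exact ⟨Or.inr h1, h2⟩
          · rintro ⟨h1 | h1, h2⟩
            · exact absurd h2 (h1 ▸ hvV j)
            · exact ⟨h1, h2⟩
        · intro a ha b hb
          simp only [NGraph.induce, Finset.mem_inter] at ha hb
          simp only [NGraph.induce]
          constructor
          · rintro ⟨h1, h2, h3⟩
            exact ⟨(hHadj a ha.1 b hb.1).2 h1, h2, h3⟩
          · rintro ⟨h1, h2, h3⟩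
            exact ⟨(hHadj a ha.1 b hb.1).1 h1, h2, h3⟩
  refine ⟨hstrict, ?_⟩
  -- nonemptiness
  by_contra hne
  rw [Finset.not_nonempty_iff_eq_empty] at hne
  obtain ⟨-, H', ⟨w, hwG, hH'verts, -⟩, hH'not⟩ := hstrict
  apply hH'not
  refine singleton_mem (Ps i) (hprop i) (hher i) H' w ?_
  rw [hH'verts]
  simp [NGraph.induce, hne]
end

section
/- Let 𝒢 be a generating set for the additive induced-hereditary graph property P, and let H be an arbitrary graph in P. Then 𝒢[H] := {G ∈ 𝒢 : H ≤ G} is also a generating set for P. -/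
-- AUX

lemma aux_iso_trans {G H K : NGraph} (h1 : G.Iso H) (h2 : H.Iso K) : G.Iso K := by
  obtain ⟨φ, hφb, hφa⟩ := h1
  obtain ⟨ψ, hψb, hψa⟩ := h2
  refine ⟨ψ ∘ φ, hψb.comp hφb, ?_⟩
  intro a ha b hb
  rw [hφa a ha b hb, hψa _ (hφb.mapsTo ha) _ (hφb.mapsTo hb)]; rfl

lemma aux_le_refl (G : NGraph) : G.Le G := by
  refine ⟨G.verts, le_refl _, id, ?_, ?_⟩
  · simpa [NGraph.induce] using Set.bijOn_id _
  · intro a ha b hb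
    simp only [NGraph.induce, id]
    exact ⟨fun h => ⟨h, (G.mem_of_adj a b h).1, (G.mem_of_adj a b h).2⟩, fun h => h.1⟩

lemma aux_le_trans {G K G' : NGraph} (h1 : G.Le K) (h2 : K.Le G') : G.Le G' := by
  obtain ⟨U, hU, φ, hφb, hφa⟩ := h1
  obtain ⟨W, hW, ψ, hψb, hψa⟩ := h2
  have hφb' : Set.BijOn φ (G.verts : Set ℕ) ((K.verts ∩ U : Finset ℕ) : Set ℕ) := by
    simpa [NGraph.induce] using hφb
  have hψb' : Set.BijOn ψ (K.verts : Set ℕ) ((G'.verts ∩ W : Finset ℕ) : Set ℕ) := by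
    simpa [NGraph.induce] using hψb
  refine ⟨(K.verts ∩ U).image ψ, ?_, ψ ∘ φ, ?_, ?_⟩
  · intro x hx
    obtain ⟨y, hy, rfl⟩ := Finset.mem_image.1 hx
    have := hψb'.mapsTo (by simpa using (Finset.mem_inter.1 hy).1)
    simp only [Finset.coe_inter, Set.mem_inter_iff, Finset.mem_coe] at this
    exact this.1
  · have h1 : Set.BijOn ψ ((K.verts ∩ U : Finset ℕ) : Set ℕ)
        (ψ '' ((K.verts ∩ U : Finset ℕ) : Set ℕ)) := by
      refine (hψb'.injOn.mono ?_).bijOn_image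
      intro x hx; simp only [Finset.coe_inter, Set.mem_inter_iff, Finset.mem_coe] at hx
      exact hx.1
    have himg : ((G'.induce ((K.verts ∩ U).image ψ)).verts : Set ℕ)
        = ψ '' ((K.verts ∩ U : Finset ℕ) : Set ℕ) := by
      simp only [NGraph.induce, Finset.coe_inter, Finset.coe_image]
      rw [Set.inter_eq_right.2]
      intro x hx
      obtain ⟨y, hy, rfl⟩ := hx
      have := hψb'.mapsTo (by
        simp only [Finset.coe_inter, Set.mem_inter_iff, Finset.mem_coe] at hy
        exact Finset.mem_coe.2 hy.1)
      simp only [Finset.coe_inter, Set.mem_inter_iff, Finset.mem_coe] at this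
      exact this.1
    rw [himg]
    exact h1.comp hφb'
  · intro a ha b hb
    have hfa : φ a ∈ K.verts ∩ U := by
      have := hφb'.mapsTo (Finset.mem_coe.2 ha); simpa using this
    have hfb : φ b ∈ K.verts ∩ U := by
      have := hφb'.mapsTo (Finset.mem_coe.2 hb); simpa using this
    have hKa := (Finset.mem_inter.1 hfa).1
    have hKb := (Finset.mem_inter.1 hfb).1
    have e1 := hφa a ha b hb
    have e2 := hψa (φ a) hKa (φ b) hKb
    simp only [NGraph.induce] at e1 e2 ⊢
    constructor
    · intro h
      have := (e2.1 ((e1.1 h).1))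
      exact ⟨this.1, Finset.mem_image_of_mem ψ hfa, Finset.mem_image_of_mem ψ hfb⟩
    · intro ⟨h, _, _⟩
      have hWa : ψ (φ a) ∈ W := by
        have := hψb'.mapsTo (Finset.mem_coe.2 hKa)
        simp only [Finset.coe_inter, Set.mem_inter_iff, Finset.mem_coe] at this
        exact this.2
      have hWb : ψ (φ b) ∈ W := by
        have := hψb'.mapsTo (Finset.mem_coe.2 hKb)
        simp only [Finset.coe_inter, Set.mem_inter_iff, Finset.mem_coe] at this
        exact this.2
      exact e1.2 ⟨e2.2 ⟨h, hWa, hWb⟩, (Finset.mem_inter.1 hfa).2, (Finset.mem_inter.1 hfb).2⟩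

lemma aux_iso_le {G H K : NGraph} (h : G.Iso H) (h2 : H.Le K) : G.Le K := by
  obtain ⟨U, hU, i⟩ := h2
  exact ⟨U, hU, aux_iso_trans h i⟩

def shiftGraph (H : NGraph) (t : ℕ) : NGraph where
  verts := H.verts.image (· + t)
  Adj a b := ∃ a' b', H.Adj a' b' ∧ a = a' + t ∧ b = b' + t
  symm a b := by rintro ⟨a', b', h, e1, e2⟩; exact ⟨b', a', H.symm _ _ h, e2, e1⟩
  loopless a := by
    rintro ⟨a', b', h, rfl, e⟩
    have : b' = a' := by omega
    subst this
    exact H.loopless _ h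
  mem_of_adj a b := by
    rintro ⟨a', b', h, rfl, rfl⟩
    exact ⟨Finset.mem_image_of_mem _ (H.mem_of_adj _ _ h).1,
      Finset.mem_image_of_mem _ (H.mem_of_adj _ _ h).2⟩

lemma aux_iso_shift (H : NGraph) (t : ℕ) : H.Iso (shiftGraph H t) := by
  refine ⟨(· + t), ?_, ?_⟩
  · have : ((shiftGraph H t).verts : Set ℕ) = (· + t) '' (H.verts : Set ℕ) := by
      simp [shiftGraph]
    rw [this]
    exact Set.InjOn.bijOn_image (fun x _ y _ h => by omega)
  · intro a ha b hb
    constructor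
    · intro h; exact ⟨a, b, h, rfl, rfl⟩
    · rintro ⟨a', b', h, e1, e2⟩
      have e1' : a + t = a' + t := e1
      have e2' : b + t = b' + t := e2
      have : a' = a ∧ b' = b := by omega
      rw [← this.1, ← this.2]; exact h

def unionGraph (G H : NGraph) : NGraph where
  verts := G.verts ∪ H.verts
  Adj a b := G.Adj a b ∨ H.Adj a b
  symm a b h := h.imp (G.symm a b) (H.symm a b)
  loopless a h := h.elim (G.loopless a) (H.loopless a)
  mem_of_adj a b h := by
    rcases h with h | h
    · exact ⟨Finset.mem_union_left _ (G.mem_of_adj _ _ h).1,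
        Finset.mem_union_left _ (G.mem_of_adj _ _ h).2⟩
    · exact ⟨Finset.mem_union_right _ (H.mem_of_adj _ _ h).1,
        Finset.mem_union_right _ (H.mem_of_adj _ _ h).2⟩

lemma aux_isDisjUnion (G H : NGraph) (hd : Disjoint G.verts H.verts) :
    IsDisjUnion (unionGraph G H) ![G, H] := by
  refine ⟨?_, ?_, ?_⟩
  · intro i j hij
    fin_cases i <;> fin_cases j <;>
      first
      | exact absurd rfl hij
      | simpa using hd
      | simpa using hd.symm
  · ext x
    simp [unionGraph, Fin.exists_fin_two]
  · intro a b
    simp [unionGraph, Fin.exists_fin_two]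

lemma aux_left_le (G H : NGraph) (hd : Disjoint G.verts H.verts) :
    G.Le (unionGraph G H) := by
  have hverts : (unionGraph G H).verts ∩ G.verts = G.verts := by
    apply Finset.inter_eq_right.2
    exact Finset.subset_union_left
  refine ⟨G.verts, Finset.subset_union_left, id, ?_, ?_⟩
  · have hv : ((unionGraph G H).induce G.verts).verts = G.verts := hverts
    rw [hv]
    exact Set.bijOn_id _
  · intro a ha b hb
    simp only [NGraph.induce, unionGraph, id]
    constructor
    · intro h; exact ⟨Or.inl h, ha, hb⟩
    · rintro ⟨h | h, _, _⟩
      · exact h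
      · exact absurd ha (Finset.disjoint_right.1 hd (H.mem_of_adj _ _ h).1)

lemma aux_right_le (G H : NGraph) (hd : Disjoint G.verts H.verts) :
    H.Le (unionGraph G H) := by
  have hverts : (unionGraph G H).verts ∩ H.verts = H.verts := by
    apply Finset.inter_eq_right.2
    exact Finset.subset_union_right
  refine ⟨H.verts, Finset.subset_union_right, id, ?_, ?_⟩
  · have hv : ((unionGraph G H).induce H.verts).verts = H.verts := hverts
    rw [hv]
    exact Set.bijOn_id _
  · intro a ha b hb
    simp only [NGraph.induce, unionGraph, id]
    constructor
    · intro h; exact ⟨Or.inr h, ha, hb⟩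
    · rintro ⟨h | h, _, _⟩
      · exact absurd ha (Finset.disjoint_left.1 hd (G.mem_of_adj _ _ h).1)
      · exact h

theorem statement5 (P : Set NGraph) (hP : IsAIH P)
    (𝒢 : Set NGraph) (hgen : Generates 𝒢 P) (H : NGraph) (hH : H ∈ P) :
    Generates {G ∈ 𝒢 | NGraph.Le H G} P := by
  unfold Generates gen
  ext G
  simp only [Set.mem_setOf_eq, Set.mem_sep_iff]
  constructor
  · rintro ⟨G', ⟨hG'𝒢, _⟩, hle⟩
    rw [← hgen]
    exact ⟨G', hG'𝒢, hle⟩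
  · intro hG
    set t := G.verts.sup id + 1 with ht
    set H' := shiftGraph H t with hH'def
    have hd : Disjoint G.verts H'.verts := by
      rw [Finset.disjoint_right]
      intro x hx hxG
      simp only [hH'def, shiftGraph, Finset.mem_image] at hx
      obtain ⟨h, _, rfl⟩ := hx
      have : h + t ≤ G.verts.sup id := Finset.le_sup (f := id) hxG
      omega
    have hH' : H' ∈ P := hP.1.2.2 H H' (aux_iso_shift H t) hH
    have hK : unionGraph G H' ∈ P :=
      hP.2.2 G H' (unionGraph G H') hG hH' (aux_isDisjUnion G H' hd)
    have hKgen : unionGraph G H' ∈ gen 𝒢 := by rw [hgen]; exact hK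
    obtain ⟨G'', hG''𝒢, hKle⟩ := hKgen
    refine ⟨G'', ⟨hG''𝒢, ?_⟩, ?_⟩
    · exact aux_le_trans (aux_iso_le (aux_iso_shift H t) (aux_right_le G H' hd)) hKle
    · exact aux_le_trans (aux_left_le G H' hd) hKle
end
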